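/- Let G be a finite simple graph without isolated vertices. For a vertex 𝔸 = (A′₀ ⊎ A″₀ ⊂ ⋯ ⊂ A′_k ⊎ A″_k) of sd B₁(G), the sets CN(CN(A′₀)), …, CN(CN(A′_k)), CN(A″_k), …, CN(A″₀) are closed and nonempty and satisfy CN(CN(A′₀)) ⊆ ⋯ ⊆ CN(CN(A′_k)) ⊆ CN(A″_k) ⊆ ⋯ ⊆ CN(A″₀); the map sending 𝔸 to the chain obtained from this sequence by omitting repetitions (a vertex of sd L(G)) is a simplicial ℤ₂-map sd B₁(G) → sd L(G). -/

import Mathlib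

open Finset

attribute [local instance] Classical.propDecidable

noncomputable section

variable {V : Type*}

/-- The set `CN(A)` of common neighbors of `A` in `G` (so `CN(∅) = V`). -/
def CN [Fintype V] (G : SimpleGraph V) (A : Finset V) : Finset V :=
  Finset.univ.filter fun v => ∀ a ∈ A, G.Adj a v

/-- The shore of `S ⊆ V × {1,2}` lying over `b` (with `false` for the first copy of `V`
and `true` for the second). -/
def shore (S : Finset (V × Bool)) (b : Bool) : Finset V :=
  (S.filter fun p => p.2 = b).image Prod.fst

/-- `A' ⊎ A'' := (A' × {1}) ∪ (A'' × {2})`, with `false` for `1` and `true` for `2`. -/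
def joinPair (A' A'' : Finset V) : Finset (V × Bool) :=
  A'.image (fun v => (v, false)) ∪ A''.image (fun v => (v, true))

/-- The ℤ₂-action on subsets of `V × {1,2}`: interchange the two copies of `V`,
i.e. `A' ⊎ A'' ↦ A'' ⊎ A'`. -/
def swapFinset (S : Finset (V × Bool)) : Finset (V × Bool) :=
  S.image fun p => (p.1, !p.2)

/-- `G[A', A'']` is complete: every vertex of `A'` is adjacent to every vertex of `A''`. -/
def IsCompleteBip (G : SimpleGraph V) (A' A'' : Finset V) : Prop :=
  ∀ a ∈ A', ∀ b ∈ A'', G.Adj a b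

/-- Simplices of the box complex `B(G)`: sets `A' ⊎ A''` with `A'`, `A''` disjoint,
`G[A', A'']` complete and `CN(A') ≠ ∅ ≠ CN(A'')`. -/
def BoxSimplex [Fintype V] (G : SimpleGraph V) (S : Finset (V × Bool)) : Prop :=
  Disjoint (shore S false) (shore S true) ∧
  IsCompleteBip G (shore S false) (shore S true) ∧
  (CN G (shore S false)).Nonempty ∧ (CN G (shore S true)).Nonempty

/-- Simplices of the box complex `B₀(G)`: sets `A' ⊎ A''` with `A'`, `A''` disjoint and
`G[A', A'']` complete. -/
def Box0Simplex (G : SimpleGraph V) (S : Finset (V × Bool)) : Prop :=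
  Disjoint (shore S false) (shore S true) ∧
  IsCompleteBip G (shore S false) (shore S true)

/-- Vertices of `B₁(G)`: sets `A' ⊎ A''` with `A'`, `A''` nonempty, disjoint and
`G[A', A'']` complete. -/
def B1Vertex (G : SimpleGraph V) (S : Finset (V × Bool)) : Prop :=
  (shore S false).Nonempty ∧ (shore S true).Nonempty ∧
  Disjoint (shore S false) (shore S true) ∧
  IsCompleteBip G (shore S false) (shore S true)

/-- Simplices of the order complex `B₁(G)`: chains of vertices of `B₁(G)` under inclusion. -/
def B1Simplex (G : SimpleGraph V) (C : Finset (Finset (V × Bool))) : Prop :=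
  (∀ T ∈ C, B1Vertex G T) ∧ IsChain (· ⊆ ·) (C : Set (Finset (V × Bool)))

/-- Simplices of the barycentric subdivision `sd K` of the complex `K` whose simplices are
given by the predicate `P`: chains of nonempty simplices of `K` under inclusion. -/
def sdSimplex {γ : Type*} (P : Finset γ → Prop) (C : Finset (Finset γ)) : Prop :=
  (∀ S ∈ C, P S ∧ S.Nonempty) ∧ IsChain (· ⊆ ·) (C : Set (Finset γ))

/-- Vertices of the Lovász complex `L(G)`: nonempty proper closed subsets of `V`. -/
def LVertex [Fintype V] (G : SimpleGraph V) (A : Finset V) : Prop :=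
  A.Nonempty ∧ A ≠ Finset.univ ∧ CN G (CN G A) = A

/-- Simplices of the Lovász complex `L(G)`: chains of closed sets under inclusion. -/
def LSimplex [Fintype V] (G : SimpleGraph V) (C : Finset (Finset V)) : Prop :=
  (∀ A ∈ C, LVertex G A) ∧ IsChain (· ⊆ ·) (C : Set (Finset V))

/-- The map sending a chain `𝔸 = (A'₀ ⊎ A''₀ ⊂ ⋯ ⊂ A'_k ⊎ A''_k)` of vertices of `B₁(G)`
to the chain `CN(CN(A'₀)) ⊆ ⋯ ⊆ CN(CN(A'_k)) ⊆ CN(A''_k) ⊆ ⋯ ⊆ CN(A''₀)`, with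
repetitions omitted (a set of sets). -/
def closedChain [Fintype V] (G : SimpleGraph V) (𝔸 : Finset (Finset (V × Bool))) :
    Finset (Finset V) :=
  𝔸.image (fun T => CN G (CN G (shore T false))) ∪ 𝔸.image (fun T => CN G (shore T true))

lemma mem_CN [Fintype V] {G : SimpleGraph V} {A : Finset V} {v : V} :
    v ∈ CN G A ↔ ∀ a ∈ A, G.Adj a v := by simp [CN]
lemma CN_anti [Fintype V] (G : SimpleGraph V) {A B : Finset V} (h : A ⊆ B) :
    CN G B ⊆ CN G A := fun v hv => mem_CN.2 fun a ha => mem_CN.1 hv a (h ha)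
lemma subset_CN_CN [Fintype V] (G : SimpleGraph V) (A : Finset V) :
    A ⊆ CN G (CN G A) :=
  fun v hv => mem_CN.2 fun a ha => (mem_CN.1 ha v hv).symm
lemma CN_CN_CN [Fintype V] (G : SimpleGraph V) (A : Finset V) :
    CN G (CN G (CN G A)) = CN G A :=
  Finset.Subset.antisymm (CN_anti G (subset_CN_CN G A)) (subset_CN_CN G (CN G A))
lemma shore_mono {S T : Finset (V × Bool)} (h : S ⊆ T) (b : Bool) :
    shore S b ⊆ shore T b :=
  Finset.image_subset_image (Finset.filter_subset_filter _ h)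
lemma shore_swap (S : Finset (V × Bool)) (b : Bool) :
    shore (swapFinset S) b = shore S (!b) := by
  ext v
  simp only [shore, swapFinset, Finset.mem_image, Finset.mem_filter, Finset.mem_image]
  constructor
  · rintro ⟨p, ⟨⟨q, hq, rfl⟩, h2⟩, rfl⟩
    exact ⟨q, ⟨hq, by simp at h2; simp [← h2]⟩, rfl⟩
  · rintro ⟨q, ⟨hq, h2⟩, rfl⟩
    exact ⟨(q.1, !q.2), ⟨⟨q, hq, rfl⟩, by simp [h2]⟩, rfl⟩
lemma not_mem_CN_self [Fintype V] (G : SimpleGraph V) {A : Finset V} {b : V}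
    (hb : b ∈ A) : b ∉ CN G A := fun h => G.irrefl (mem_CN.1 h b hb)
lemma B1Vertex.snd_subset_CN_fst [Fintype V] {G : SimpleGraph V} {T : Finset (V × Bool)}
    (h : B1Vertex G T) : shore T true ⊆ CN G (shore T false) :=
  fun b hb => mem_CN.2 fun a ha => h.2.2.2 a ha b hb
lemma B1Vertex.fst_subset_CN_snd [Fintype V] {G : SimpleGraph V} {T : Finset (V × Bool)}
    (h : B1Vertex G T) : shore T false ⊆ CN G (shore T true) :=
  fun a ha => mem_CN.2 fun b hb => (h.2.2.2 a ha b hb).symm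
lemma B1Vertex.cross [Fintype V] {G : SimpleGraph V} {T : Finset (V × Bool)}
    (h : B1Vertex G T) : CN G (CN G (shore T false)) ⊆ CN G (shore T true) :=
  CN_anti G h.snd_subset_CN_fst
lemma B1Vertex.lvertex_fst [Fintype V] {G : SimpleGraph V} {T : Finset (V × Bool)}
    (h : B1Vertex G T) : LVertex G (CN G (CN G (shore T false))) := by
  obtain ⟨b, hb⟩ := h.2.1
  refine ⟨h.1.mono (subset_CN_CN G _), fun huniv => ?_, CN_CN_CN G _⟩
  exact not_mem_CN_self G hb (h.cross (huniv ▸ Finset.mem_univ b))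
lemma B1Vertex.lvertex_snd [Fintype V] {G : SimpleGraph V} {T : Finset (V × Bool)}
    (h : B1Vertex G T) : LVertex G (CN G (shore T true)) := by
  obtain ⟨b, hb⟩ := h.2.1
  refine ⟨h.1.mono h.fst_subset_CN_snd, fun huniv => ?_, CN_CN_CN G _⟩
  exact not_mem_CN_self G hb (huniv ▸ Finset.mem_univ b)
lemma closedChain_mono [Fintype V] (G : SimpleGraph V) {𝔸 𝔹 : Finset (Finset (V × Bool))}
    (h : 𝔸 ⊆ 𝔹) : closedChain G 𝔸 ⊆ closedChain G 𝔹 :=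
  Finset.union_subset_union (Finset.image_subset_image h) (Finset.image_subset_image h)

/-- For a vertex `𝔸` of `sd B₁(G)` the sets `CN(CN(A'_i))` and `CN(A''_i)` are closed,
nonempty and form a chain as displayed, and `𝔸 ↦ closedChain G 𝔸` is a simplicial
ℤ₂-map `sd B₁(G) → sd L(G)`. -/
theorem sd_B1_to_sd_Lovasz [Fintype V] (G : SimpleGraph V) (hiso : ∀ v : V, ∃ u, G.Adj v u) :
    (∀ 𝔸 : Finset (Finset (V × Bool)), 𝔸.Nonempty → B1Simplex G 𝔸 →
      (∀ A ∈ closedChain G 𝔸, LVertex G A) ∧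
      (∀ T ∈ 𝔸, ∀ T' ∈ 𝔸, T ⊆ T' →
        CN G (CN G (shore T false)) ⊆ CN G (CN G (shore T' false)) ∧
        CN G (shore T' true) ⊆ CN G (shore T true)) ∧
      (∀ T ∈ 𝔸, ∀ T' ∈ 𝔸, CN G (CN G (shore T false)) ⊆ CN G (shore T' true)) ∧
      (closedChain G 𝔸).Nonempty ∧ LSimplex G (closedChain G 𝔸)) ∧
    (∀ 𝒞 : Finset (Finset (Finset (V × Bool))), sdSimplex (B1Simplex G) 𝒞 →
      sdSimplex (LSimplex G) (𝒞.image (closedChain G))) ∧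
    (∀ 𝔸 : Finset (Finset (V × Bool)), 𝔸.Nonempty → B1Simplex G 𝔸 →
      closedChain G (𝔸.image swapFinset) = (closedChain G 𝔸).image (CN G)) := by
  have main : ∀ 𝔸 : Finset (Finset (V × Bool)), 𝔸.Nonempty → B1Simplex G 𝔸 →
      (∀ A ∈ closedChain G 𝔸, LVertex G A) ∧
      (∀ T ∈ 𝔸, ∀ T' ∈ 𝔸, T ⊆ T' →
        CN G (CN G (shore T false)) ⊆ CN G (CN G (shore T' false)) ∧
        CN G (shore T' true) ⊆ CN G (shore T true)) ∧
      (∀ T ∈ 𝔸, ∀ T' ∈ 𝔸, CN G (CN G (shore T false)) ⊆ CN G (shore T' true)) ∧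
      (closedChain G 𝔸).Nonempty ∧ LSimplex G (closedChain G 𝔸) := by
    intro 𝔸 hne hB
    obtain ⟨hvert, hchain⟩ := hB
    have h1 : ∀ A ∈ closedChain G 𝔸, LVertex G A := by
      intro A hA
      rcases Finset.mem_union.1 hA with hA | hA <;>
        obtain ⟨T, hT, rfl⟩ := Finset.mem_image.1 hA
      · exact (hvert T hT).lvertex_fst
      · exact (hvert T hT).lvertex_snd
    have h2 : ∀ T ∈ 𝔸, ∀ T' ∈ 𝔸, T ⊆ T' →
        CN G (CN G (shore T false)) ⊆ CN G (CN G (shore T' false)) ∧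
        CN G (shore T' true) ⊆ CN G (shore T true) := by
      intro T _ T' _ h
      exact ⟨CN_anti G (CN_anti G (shore_mono h false)), CN_anti G (shore_mono h true)⟩
    have h3 : ∀ T ∈ 𝔸, ∀ T' ∈ 𝔸, CN G (CN G (shore T false)) ⊆ CN G (shore T' true) := by
      intro T hT T' hT'
      rcases hchain.total hT hT' with h | h
      · exact ((h2 T hT T' hT' h).1).trans (hvert T' hT').cross
      · exact (hvert T hT).cross.trans (h2 T' hT' T hT h).2
    refine ⟨h1, h2, h3, ?_, h1, ?_⟩
    · obtain ⟨T, hT⟩ := hne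
      exact ⟨_, Finset.mem_union_left _ (Finset.mem_image_of_mem _ hT)⟩
    · intro X hX Y hY _
      simp only [closedChain, Finset.coe_union, Set.mem_union, Finset.coe_image,
        Set.mem_image, Finset.mem_coe] at hX hY
      rcases hX with ⟨T, hT, rfl⟩ | ⟨T, hT, rfl⟩ <;>
        rcases hY with ⟨T', hT', rfl⟩ | ⟨T', hT', rfl⟩
      · rcases hchain.total hT hT' with h | h
        · exact Or.inl (h2 T hT T' hT' h).1
        · exact Or.inr (h2 T' hT' T hT h).1
      · exact Or.inl (h3 T hT T' hT')
      · exact Or.inr (h3 T' hT' T hT)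
      · rcases hchain.total hT hT' with h | h
        · exact Or.inr (h2 T hT T' hT' h).2
        · exact Or.inl (h2 T' hT' T hT h).2
  refine ⟨main, ?_, ?_⟩
  · intro 𝒞 ⟨hv, hc⟩
    constructor
    · intro S hS
      obtain ⟨𝔸, h𝔸, rfl⟩ := Finset.mem_image.1 hS
      obtain ⟨hB, hne⟩ := hv 𝔸 h𝔸
      obtain ⟨_, _, _, hne', hL⟩ := main 𝔸 hne hB
      exact ⟨hL, hne'⟩
    · rw [Finset.coe_image]
      exact hc.image_of_map_rel _ _ _ (fun _ _ h => closedChain_mono G h)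
  · intro 𝔸 _ _
    simp only [closedChain, Finset.image_union, Finset.image_image]
    rw [Finset.union_comm]
    congr 1 <;> apply Finset.image_congr <;> intro T _ <;>
      simp only [Function.comp_apply, shore_swap, CN_CN_CN, Bool.not_false, Bool.not_true]
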